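/- The set of a ∈ ℂ for which the polynomial g_{1,a}(t,x) is not irreducible in the polynomial ring ℂ[t,x] is finite; in particular, for all but finitely many a ∈ ℂ the conic g_{1,a} = 0 is reduced and irreducible. -/

import Mathlib

open MvPolynomial

/-- The conic `g_{1,a}(t,x) = (−2 − a²/2)t² − √−2·a·x·t − x² + (a² + 2)x + 2a² + 4`
(`√−2 = i√2`), as an element of `ℂ[t,x]`; here `t = X 0` and `x = X 1`. -/
noncomputable def g1 (a : ℂ) : MvPolynomial (Fin 2) ℂ :=
  C (-2 - a ^ 2 / 2) * X 0 ^ 2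
    - C (Complex.I * (Real.sqrt 2 : ℂ) * a) * X 1 * X 0
    - X 1 ^ 2 + C (a ^ 2 + 2) * X 1 + C (2 * a ^ 2 + 4)

/-- The isomorphism `ℂ[t,x] ≃ (ℂ[t])[x]`, sending `X 1` (i.e. `x`) to the outer variable. -/
noncomputable def e2 : MvPolynomial (Fin 2) ℂ ≃ₐ[ℂ] Polynomial (Polynomial ℂ) :=
  (renameEquiv ℂ (Equiv.swap 0 1)).trans <|
  (MvPolynomial.finSuccEquiv ℂ 1).trans <|
  Polynomial.mapAlgEquiv <|
  (MvPolynomial.finSuccEquiv ℂ 0).trans (Polynomial.mapAlgEquiv (isEmptyAlgEquiv ℂ (Fin 0)))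

noncomputable def Bq (a : ℂ) : Polynomial ℂ :=
  Polynomial.C (a ^ 2 + 2) - Polynomial.C (Complex.I * (Real.sqrt 2 : ℂ) * a) * Polynomial.X

noncomputable def Cq (a : ℂ) : Polynomial ℂ :=
  Polynomial.C (-2 - a ^ 2 / 2) * Polynomial.X ^ 2 + Polynomial.C (2 * a ^ 2 + 4)

/-- The discriminant `Bq² + 4 Cq` of `g1` viewed as a quadratic in `x`. -/
noncomputable def Dq (a : ℂ) : Polynomial ℂ :=
  Polynomial.C (-4 * a ^ 2 - 8) * Polynomial.X ^ 2
    + Polynomial.C (-2 * (Complex.I * (Real.sqrt 2 : ℂ)) * a * (a ^ 2 + 2)) * Polynomial.X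
    + Polynomial.C (a ^ 4 + 12 * a ^ 2 + 20)

noncomputable def pq (a : ℂ) : Polynomial (Polynomial ℂ) :=
  Polynomial.X ^ 2 - Polynomial.C (Bq a) * Polynomial.X - Polynomial.C (Cq a)

lemma hs2 : (Complex.I * (Real.sqrt 2 : ℂ)) ^ 2 = -2 := by
  have h : ((Real.sqrt 2 : ℝ) : ℂ) ^ 2 = ((2 : ℝ) : ℂ) := by
    rw [← Complex.ofReal_pow, Real.sq_sqrt (by norm_num : (0:ℝ) ≤ 2)]
  rw [mul_pow, Complex.I_sq, h]
  norm_num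

lemma e2_g1 (a : ℂ) : e2 (g1 a) = -(pq a) := by
  have hone : (1 : Fin 2) = Fin.succ 0 := rfl
  have h0 : e2 (MvPolynomial.X 0) = Polynomial.C Polynomial.X := by
    simp only [e2, AlgEquiv.trans_apply, renameEquiv_apply, rename_X, Equiv.swap_apply_left,
      hone, finSuccEquiv_X_succ, Polynomial.coe_mapAlgEquiv, Polynomial.map_C,
      finSuccEquiv_X_zero, Polynomial.map_X, AlgEquiv.trans_apply]
    congr 1
    show ((MvPolynomial.finSuccEquiv ℂ 0).trans
      (Polynomial.mapAlgEquiv (isEmptyAlgEquiv ℂ (Fin 0)))) (MvPolynomial.X 0) = Polynomial.X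
    simp [AlgEquiv.trans_apply, finSuccEquiv_X_zero]
  have h1 : e2 (MvPolynomial.X 1) = Polynomial.X := by
    simp only [e2, AlgEquiv.trans_apply, renameEquiv_apply, rename_X, Equiv.swap_apply_right,
      finSuccEquiv_X_zero, Polynomial.coe_mapAlgEquiv, Polynomial.map_X, AlgEquiv.trans_apply]
  have hc : ∀ r : ℂ, e2 (MvPolynomial.C r) = Polynomial.C (Polynomial.C r) := by
    intro r
    simp only [e2, AlgEquiv.trans_apply, renameEquiv_apply, rename_C,
      MvPolynomial.finSuccEquiv_apply, eval₂Hom_C, RingHom.coe_comp, Function.comp_apply,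
      Polynomial.coe_mapAlgEquiv, Polynomial.map_C]
    congr 1
    simp [MvPolynomial.finSuccEquiv_apply, eval₂Hom_C, isEmptyAlgEquiv, MvPolynomial.aeval_C]
    rw [← isEmptyAlgEquiv_symm_apply (R := ℂ) (σ := Fin 0) (r := r)]
    exact (isEmptyAlgEquiv ℂ (Fin 0)).apply_symm_apply r
  simp only [g1, map_add, map_sub, map_mul, map_pow, h0, h1, hc, pq, Bq, Cq]
  ring

lemma hDq (a : ℂ) : Bq a ^ 2 + 4 * Cq a = Dq a := by
  apply Polynomial.funext
  intro x
  simp only [Bq, Cq, Dq, Polynomial.eval_add, Polynomial.eval_sub, Polynomial.eval_mul,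
    Polynomial.eval_pow, Polynomial.eval_C, Polynomial.eval_X, Polynomial.eval_ofNat]
  linear_combination (a ^ 2 * x ^ 2) * hs2

lemma Dq_sep (a : ℂ) (h2 : a ^ 2 + 2 ≠ 0) (h20 : a ^ 2 + 20 ≠ 0) : (Dq a).Separable := by
  set s : ℂ := Complex.I * (Real.sqrt 2 : ℂ)
  have hder : (Dq a).derivative =
      2 * (Polynomial.C (-4 * a ^ 2 - 8)) * Polynomial.X
        + Polynomial.C (-2 * s * a * (a ^ 2 + 2)) := by
    simp only [Dq, Polynomial.derivative_add, Polynomial.derivative_C_mul,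
      Polynomial.derivative_X_pow, Polynomial.derivative_X, Polynomial.derivative_C,
      Nat.cast_ofNat, map_ofNat]
    ring
  set k : ℂ := -8 * (a ^ 2 + 2) ^ 2 * (a ^ 2 + 20) with hk_def
  have hk : k ≠ 0 := by
    simp only [hk_def]
    intro h
    rcases mul_eq_zero.mp h with h | h
    · rcases mul_eq_zero.mp h with h | h
      · norm_num at h
      · exact h2 (pow_eq_zero_iff (by norm_num) |>.mp h)
    · exact h20 h
  refine ⟨Polynomial.C (4 * (-4 * a ^ 2 - 8) * k⁻¹),
    -(Polynomial.C k⁻¹) * (2 * Polynomial.C (-4 * a ^ 2 - 8) * Polynomial.X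
      + Polynomial.C (-2 * s * a * (a ^ 2 + 2))), ?_⟩
  rw [hder]
  apply Polynomial.funext
  intro x
  simp only [Dq, Polynomial.eval_add, Polynomial.eval_sub, Polynomial.eval_mul,
    Polynomial.eval_pow, Polynomial.eval_C, Polynomial.eval_X, Polynomial.eval_neg,
    Polynomial.eval_one, Polynomial.eval_ofNat]
  field_simp
  linear_combination (-4 * a ^ 2 * (a^2+2)^2) * hs2

lemma pq_eq (a : ℂ) : pq a =
    Polynomial.X ^ 2 - (Polynomial.C (Bq a) * Polynomial.X + Polynomial.C (Cq a)) := by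
  rw [pq]; ring

lemma pq_monic (a : ℂ) : (pq a).Monic := by
  rw [pq_eq, show (2:ℕ) = 1 + 1 from rfl]
  exact Polynomial.monic_X_pow_sub (lt_of_le_of_lt Polynomial.degree_linear_le (by norm_num))

lemma pq_natDegree (a : ℂ) : (pq a).natDegree = 2 := by
  apply Polynomial.natDegree_eq_of_degree_eq_some
  rw [pq_eq, Polynomial.degree_sub_eq_left_of_degree_lt, Polynomial.degree_X_pow]
  rw [Polynomial.degree_X_pow]
  exact lt_of_le_of_lt Polynomial.degree_linear_le (by decide)

lemma g1_irred (a : ℂ) (h2 : a ^ 2 + 2 ≠ 0) (h20 : a ^ 2 + 20 ≠ 0) : Irreducible (g1 a) := by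
  have hα : (-4 * a ^ 2 - 8 : ℂ) ≠ 0 := by
    have h : (-4 : ℂ) * (a ^ 2 + 2) ≠ 0 := mul_ne_zero (by norm_num) h2
    intro h'; exact h (by linear_combination h')
  have hpq : Irreducible (pq a) := by
    rw [(pq_monic a).irreducible_iff_irreducible_map_fraction_map
      (K := FractionRing (Polynomial ℂ))]
    set K := FractionRing (Polynomial ℂ)
    set φ := algebraMap (Polynomial ℂ) K with hφ
    rw [Polynomial.irreducible_iff_roots_eq_zero_of_degree_le_three]
    · rw [Multiset.eq_zero_iff_forall_notMem]
      intro z hz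
      rw [Polynomial.mem_roots ((pq_monic a).map φ).ne_zero] at hz
      have hz' : z ^ 2 - φ (Bq a) * z - φ (Cq a) = 0 := by
        simpa only [pq, Polynomial.IsRoot, Polynomial.map_sub, Polynomial.map_pow,
          Polynomial.map_mul, Polynomial.map_X, Polynomial.map_C, Polynomial.eval_sub,
          Polynomial.eval_pow, Polynomial.eval_mul, Polynomial.eval_X, Polynomial.eval_C]
          using hz
      have hw : (2 * z - φ (Bq a)) ^ 2 = φ (Bq a ^ 2 + 4 * Cq a) := by
        rw [map_add, map_mul, map_pow, map_ofNat]
        linear_combination 4 * hz'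
      have hint : IsIntegral (Polynomial ℂ) (2 * z - φ (Bq a)) := by
        refine ⟨Polynomial.X ^ 2 - Polynomial.C (Bq a ^ 2 + 4 * Cq a),
          Polynomial.monic_X_pow_sub_C _ (by norm_num), ?_⟩
        simp only [Polynomial.eval₂_sub, Polynomial.eval₂_pow, Polynomial.eval₂_X,
          Polynomial.eval₂_C]
        rw [hw, sub_self]
      obtain ⟨u, hu⟩ := IsIntegrallyClosed.isIntegral_iff.mp hint
      have hu2 : u ^ 2 = Dq a := by
        apply IsFractionRing.injective (Polynomial ℂ) K
        rw [← hDq a, map_pow, hu, hw]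
      have hdegD : (Dq a).natDegree = 2 := Polynomial.natDegree_quadratic hα
      have hu1 : u.natDegree = 1 := by
        have h := Polynomial.natDegree_pow u 2
        rw [hu2, hdegD] at h
        omega
      have hsq : Squarefree (Dq a) := (Dq_sep a h2 h20).squarefree
      have hunit : IsUnit u := hsq u ⟨1, by rw [← hu2]; ring⟩
      rw [Polynomial.natDegree_eq_zero_of_isUnit hunit] at hu1
      exact absurd hu1 (by norm_num)
    · rw [(pq_monic a).natDegree_map, pq_natDegree]
    · rw [(pq_monic a).natDegree_map, pq_natDegree]; norm_num
  have hassoc : Associated (pq a) (-(pq a)) := ⟨-1, by simp⟩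
  have h1 : Irreducible (e2 (g1 a)) := by
    rw [e2_g1]
    exact hassoc.irreducible hpq
  exact (MulEquiv.irreducible_iff e2).mp h1

/-- The set of `a ∈ ℂ` for which `g_{1,a}(t,x)` is not irreducible in `ℂ[t,x]` is finite;
in particular, for all but finitely many `a ∈ ℂ` the conic `g_{1,a} = 0` is reduced and
irreducible. -/
theorem finite_not_irreducible_g1 : {a : ℂ | ¬ Irreducible (g1 a)}.Finite := by
  have hP : ((Polynomial.X ^ 2 + Polynomial.C 2) * (Polynomial.X ^ 2 + Polynomial.C 20)
      : Polynomial ℂ) ≠ 0 := by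
    intro h
    have := congrArg (Polynomial.eval 0) h
    simp at this
  apply Set.Finite.subset (Polynomial.finite_setOf_isRoot hP)
  intro a ha
  simp only [Set.mem_setOf_eq, Polynomial.IsRoot, Polynomial.eval_mul, Polynomial.eval_add,
    Polynomial.eval_pow, Polynomial.eval_X, Polynomial.eval_C] at ha ⊢
  by_contra h
  obtain ⟨h2, h20⟩ := mul_ne_zero_iff.mp h
  exact ha (g1_irred a h2 h20)
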